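/- If f is holomorphic near a fixed point z₀ with f(z₀) = z₀, U, W are sets with z₀ ∈ f^l(W), z_l ∈ W, f^l(z_l) = z₀, z_l ≠ z₀, g is an inverse branch of f fixing z₀ with z₀ its unique periodic point, h is the inverse branch of f^l with h(z₀) = z_l, and w_n is a fixed point of h ∘ g^{n−l} with n ≥ 2l, then w_n is a periodic point of f of exact period n. -/
import Mathlib


/-- Homoclinic construction: with `g` an inverse branch of `f` on `V` fixing `z₀` whose
unique periodic point in `V` is `z₀`, `h` an inverse branch of `f^[l]` sending `z₀` to
`z_l ≠ z₀`, and `w ∈ W` a fixed point of `h ∘ g^[n−l]` with `n ≥ 2l`, the point `w` is a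
periodic point of `f` of exact period `n`. -/
theorem stmt_15 (f g h : ℂ → ℂ) (V U W : Set ℂ) (z₀ zl w : ℂ) (l n : ℕ)
    (hl : 1 ≤ l) (hn : 2 * l ≤ n)
    (hfz : f z₀ = z₀) (hz₀V : z₀ ∈ V) (hWV : W ⊆ V)
    (hgmaps : Set.MapsTo g V V) (hfg : ∀ z ∈ V, f (g z) = z) (hgz : g z₀ = z₀)
    (huniq : ∀ z ∈ V, ∀ k : ℕ, 0 < k → g^[k] z = z → z = z₀)
    (hzl : zl ≠ z₀) (hh0 : h z₀ = zl)
    (hwW : w ∈ W) (hfixw : h (g^[n - l] w) = w)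
    (hfh : f^[l] (h (g^[n - l] w)) = g^[n - l] w) :
    f^[n] w = w ∧ ∀ q : ℕ, 0 < q → q < n → f^[q] w ≠ w := by
  have hwV : w ∈ V := hWV hwW
  have hgk : ∀ k, g^[k] w ∈ V := fun k => by
    induction k with
    | zero => exact hwV
    | succ k ih => rw [Function.iterate_succ_apply']; exact hgmaps ih
  have key : ∀ i m, i ≤ m → f^[i] (g^[m] w) = g^[m - i] w := by
    intro i
    induction i with
    | zero => intro m _; simp
    | succ i ih =>
      intro m him
      obtain ⟨m', rfl⟩ : ∃ m', m = m' + 1 := ⟨m - 1, by omega⟩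
      rw [Function.iterate_succ_apply, Function.iterate_succ_apply' g m',
        hfg _ (hgk m'), ih m' (by omega)]
      congr 1
      omega
  have hflw : f^[l] w = g^[n - l] w := by rw [hfixw] at hfh; exact hfh
  have hfj : ∀ j, l ≤ j → j ≤ n → f^[j] w = g^[n - j] w := by
    intro j hlj hjn
    have h1 : f^[j] w = f^[j - l] (f^[l] w) := by
      rw [← Function.iterate_add_apply]
      congr 1; omega
    rw [h1, hflw, key (j - l) (n - l) (by omega)]
    congr 1; omega
  have hfn : f^[n] w = w := by
    have := hfj n (by omega) le_rfl
    simpa using this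
  refine ⟨hfn, ?_⟩
  intro q hq hqn hfq
  set d := Nat.gcd q n with hd
  have hdpos : 0 < d := Nat.gcd_pos_of_pos_left _ hq
  have hdvd : d ∣ n := Nat.gcd_dvd_right q n
  have hdq : d ≤ q := Nat.le_of_dvd hq (Nat.gcd_dvd_left q n)
  have hdn : d < n := lt_of_le_of_lt hdq hqn
  have hpd : f^[d] w = w := Function.IsPeriodicPt.gcd hfq hfn
  obtain ⟨k, hk⟩ := hdvd
  have hk2 : 2 ≤ k := by
    rcases Nat.lt_or_ge k 2 with hlt | hge
    · interval_cases k <;> omega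
    · exact hge
  have h2d : 2 * d ≤ n := by nlinarith
  have e1 : f^[n - d] w = g^[n - (n - d)] w := hfj (n - d) (by omega) (by omega)
  have e2 : f^[n - d] w = w := by
    have h3 : f^[n - d] (f^[d] w) = w := by
      rw [← Function.iterate_add_apply, show n - d + d = n by omega]
      exact hfn
    rwa [hpd] at h3
  have hgd : g^[d] w = w := by
    rw [show d = n - (n - d) by omega, ← e1, e2]
  have hwz : w = z₀ := huniq w hwV d hdpos hgd
  subst hwz
  rw [Function.iterate_fixed hgz, hh0] at hfixw
  exact hzl hfixw
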